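/- For every reduced parallelogram polyomino P of size m × n, the bounce statistic of P equals the pmaj statistic of the two-cars parking function ψ(P) obtained from P via the area-word bijection: bounce(P) = pmaj(ψ(P)). -/

import Mathlib

open Finset

/-! ## Lattice-path preliminaries for parallelogram polyominoes.
Paths are lists of booleans: `true` = north step, `false` = east step. -/

/-- Interlacing `D = (r₁, 1-g₁, r₂, 1-g₂, …)` of the red path and the complemented green path. -/
def interlace : List Bool → List Bool → List Bool
  | [], _ => []
  | _ :: _, [] => []
  | a :: as, b :: bs => a :: (!b) :: interlace as bs

/-- Reading levels along a 0/1 word: on a `true` record the current level and go up one level,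
on a `false` go down one level (recording nothing). -/
def levels : List Bool → ℕ → List ℕ
  | [], _ => []
  | true :: rest, l => l :: levels rest (l + 1)
  | false :: rest, l => levels rest (l - 1)

def countTrue (l : List Bool) : ℕ := (l.filter fun b => b = true).length
def countFalse (l : List Bool) : ℕ := (l.filter fun b => b = false).length

/-- The number of `true`s (north steps) occurring before the `(x+1)`-st `false` (east step):
the height of the path along the column `x ↦ x+1`. -/
def colHeight : List Bool → ℕ → ℕ
  | [], _ => 0
  | true :: rest, k => colHeight rest k + 1
  | false :: _, 0 => 0
  | false :: rest, k + 1 => colHeight rest k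

/-- The number of `false`s (east steps) occurring before the `(y+1)`-st `true` (north step). -/
def colX (p : List Bool) (y : ℕ) : ℕ := colHeight (p.map fun b => !b) y

/-- `r` and `g` are the red (upper) and green (lower) boundary paths of an `m × n`
parallelogram polyomino: both go from `(0,0)` to `(m,n)` and the red one stays strictly
above the green one except at the endpoints. -/
def IsPolyo (m n : ℕ) (r g : List Bool) : Prop :=
  r.length = m + n ∧ g.length = m + n ∧ countTrue r = n ∧ countTrue g = n ∧
    ∀ i : ℕ, 1 ≤ i → i < m + n → countTrue (g.take i) < countTrue (r.take i)

/-- Reduced parallelogram polyomino: the red path stays weakly above the green one. -/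
def IsRPolyo (m n : ℕ) (r g : List Bool) : Prop :=
  r.length = m + n ∧ g.length = m + n ∧ countTrue r = n ∧ countTrue g = n ∧
    ∀ i : ℕ, countTrue (g.take i) ≤ countTrue (r.take i)

/-- The area word of a (standard) parallelogram polyomino, as the list of letters of the
alphabet `0̄ < 1 < 1̄ < 2 < 2̄ < ⋯` encoded by their indices `0, 1, 2, 3, 4, …`.
Barred letters have even index, unbarred letters odd index. -/
def areaWord (r g : List Bool) : List ℕ := levels (interlace r g) 0

/-- The numerical value of the letter with index `j` in the alphabet `0̄ < 1 < 1̄ < 2 < ⋯`. -/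
def wval (j : ℕ) : ℕ := (j + 1) / 2

/-- The number of unit cells strictly between the two boundary paths. -/
def cellArea (m : ℕ) (r g : List Bool) : ℕ :=
  ∑ x ∈ Finset.range m, (colHeight r x - colHeight g x)

/-- `area` as the sum of the values of the letters of the area word. -/
def areaStat (r g : List Bool) : ℕ := ((areaWord r g).map wval).sum

/-- `dinv`: the number of pairs of letters of the area word such that the rightmost letter is
the successor (in the alphabet `0̄ < 1 < 1̄ < ⋯`) of the leftmost one. -/
def dinvStat (r g : List Bool) : ℕ :=
  ((Finset.range (areaWord r g).length ×ˢ Finset.range (areaWord r g).length).filter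
    fun p => p.1 < p.2 ∧ (areaWord r g).getD p.2 0 = (areaWord r g).getD p.1 0 + 1).card

/-- A rise of the area word: a barred letter immediately followed by its successor. -/
def IsRise (w : List ℕ) (i : ℕ) : Prop :=
  i + 1 < w.length ∧ w.getD i 0 % 2 = 0 ∧ w.getD (i + 1) 0 = w.getD i 0 + 1

/-- `underlined area`: the sum of the values of the letters of the area word, ignoring the
(barred) letters at the decorated positions `D`. -/
def uareaStat (r g : List Bool) (D : Finset ℕ) : ℕ :=
  ∑ i ∈ Finset.range (areaWord r g).length \ D, wval ((areaWord r g).getD i 0)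

/-! ### Reduced polyominoes, their bounce, and the `pmaj` of parking functions. -/

/-- The area word of a reduced parallelogram polyomino, with the initial artificial `0`,
as the list of letters of the alphabet `0 < 0̄ < 1 < 1̄ < 2 < ⋯` encoded by their indices.
Barred letters have odd index; the letter of index `j` has value `j / 2`. -/
def areaWordR (r g : List Bool) : List ℕ := 0 :: levels (interlace r g) 1

/-- Auxiliary computation of the bounce path of a reduced parallelogram polyomino: from
`(x, y)` travel east to the start of the vertical green step at height `y`, then north to the
start of the horizontal red step at the new abscissa, and repeat.  Returns the list of the
lengths of the successive (east, north, east, north, …) runs. -/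
def bRunsRedAux (r g : List Bool) : ℕ → ℕ → ℕ → List ℕ
  | 0, _, _ => []
  | fuel + 1, x, y =>
    let x' := colX g y
    let y' := colHeight r x'
    if x' = x ∧ y' = y then []
    else (x' - x) :: (y' - y) :: bRunsRedAux r g fuel x' y'

/-- The `bounce` statistic of a reduced parallelogram polyomino: the letters of the bounce
word on the `j`-th run of the bounce path have value `j / 2` in the alphabet
`0 < 0̄ < 1 < 1̄ < 2 < ⋯`. -/
def bounceRed (r g : List Bool) : ℕ :=
  ∑ j ∈ Finset.range (bRunsRedAux r g (r.length + 1) 0 0).length,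
    (j / 2) * (bRunsRedAux r g (r.length + 1) 0 0).getD j 0

/-- The major index of a word: the sum of the (1-indexed) positions of the descents. -/
def majL (l : List ℕ) : ℕ :=
  ∑ i ∈ Finset.range (l.length - 1), if l.getD (i + 1) 0 < l.getD i 0 then i + 1 else 0

/-- The `pmaj` word `w₁ w₂ ⋯` of a parking function, given the list of multisets of labels in
its successive columns: `C₁` is the multiset of labels of the first column and `w₁ = max C₁`;
at step `i`, `Cᵢ` is obtained from `Cᵢ₋₁` by removing `wᵢ₋₁` and adding the labels of the
`i`-th column, and `wᵢ` is the largest element of `Cᵢ` not exceeding `wᵢ₋₁` if one exists,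
and the maximum of `Cᵢ` otherwise. -/
def pmajGo : List (Multiset ℕ) → Multiset ℕ → Option ℕ → List ℕ
  | [], _, _ => []
  | col :: rest, C, wprev =>
    let C' := (match wprev with | none => C | some w => C.erase w) + col
    let w := match wprev with
      | none => C'.sup
      | some wp => if C'.filter (fun x => x ≤ wp) = 0 then C'.sup
                   else (C'.filter fun x => x ≤ wp).sup
    w :: pmajGo rest C' (some w)

/-- `pmaj`: the major index of the reversed `pmaj` word. -/
def pmajOfCols (cols : List (Multiset ℕ)) : ℕ := majL (pmajGo cols 0 none).reverse

/-- The columns of the two-cars parking function `ψ(P)` associated to a reduced parallelogram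
polyomino: the `i`-th letter (artificial `0` removed) of the area word gives a row with
area-word value `⌊j/2⌋` and label `1` if the letter is barred (odd index) and `2` otherwise;
the row `i` lies in column `i - bᵢ`. -/
def psiCols (r g : List Bool) : List (Multiset ℕ) :=
  (List.range (areaWordR r g).tail.length).map fun c =>
    (((Finset.range (areaWordR r g).tail.length).filter fun i =>
        i - ((areaWordR r g).tail.getD i 0) / 2 = c).val.map
      fun i => if ((areaWordR r g).tail.getD i 0) % 2 = 1 then 1 else 2)

section CountBasics

def cnt (p : List Bool) (t : ℕ) : ℕ := countTrue (p.take t)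
def cntF (p : List Bool) (t : ℕ) : ℕ := countFalse (p.take t)

lemma countTrue_cons (b : Bool) (l : List Bool) :
    countTrue (b :: l) = (if b then 1 else 0) + countTrue l := by
  cases b <;> simp [countTrue] <;> omega

lemma countFalse_cons (b : Bool) (l : List Bool) :
    countFalse (b :: l) = (if b then 0 else 1) + countFalse l := by
  cases b <;> simp [countFalse] <;> omega

lemma countTrue_append (l₁ l₂ : List Bool) :
    countTrue (l₁ ++ l₂) = countTrue l₁ + countTrue l₂ := by
  simp [countTrue]

lemma countTrue_add_countFalse (p : List Bool) :
    countTrue p + countFalse p = p.length := by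
  induction p with
  | nil => rfl
  | cons b l ih => cases b <;> simp [countTrue_cons, countFalse_cons] <;> omega

lemma cnt_zero (p : List Bool) : cnt p 0 = 0 := rfl
lemma cntF_zero (p : List Bool) : cntF p 0 = 0 := rfl

lemma cnt_succ (p : List Bool) (t : ℕ) :
    cnt p (t + 1) = cnt p t + (if p.getD t false then 1 else 0) := by
  induction p generalizing t with
  | nil => simp [cnt, countTrue]
  | cons b l ih =>
    cases t with
    | zero => cases b <;> simp [cnt, countTrue_cons, countTrue]
    | succ t =>
      simp only [cnt, List.take_succ_cons, countTrue_cons, List.getD_cons_succ]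
      have := ih t; simp only [cnt] at this; omega

lemma cntF_succ (p : List Bool) (t : ℕ) (ht : t < p.length) :
    cntF p (t + 1) = cntF p t + (if p.getD t false then 0 else 1) := by
  induction p generalizing t with
  | nil => simp at ht
  | cons b l ih =>
    cases t with
    | zero => cases b <;> simp [cntF, countFalse_cons, countFalse]
    | succ t =>
      simp only [List.length_cons, Nat.add_lt_add_iff_right] at ht
      simp only [cntF, List.take_succ_cons, countFalse_cons, List.getD_cons_succ]
      have := ih t ht; simp only [cntF] at this; omega

lemma take_prefix_take (p : List Bool) {t t' : ℕ} (h : t ≤ t') :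
    List.Sublist (p.take t) (p.take t') := by
  have : (p.take t').take t = p.take t := by
    rw [List.take_take, min_eq_left h]
  rw [← this]
  exact (List.take_prefix t (p.take t')).sublist

lemma cnt_mono (p : List Bool) {t t' : ℕ} (h : t ≤ t') : cnt p t ≤ cnt p t' :=
  List.Sublist.length_le (List.Sublist.filter _ (take_prefix_take p h))

lemma cntF_mono (p : List Bool) {t t' : ℕ} (h : t ≤ t') : cntF p t ≤ cntF p t' :=
  List.Sublist.length_le (List.Sublist.filter _ (take_prefix_take p h))

lemma cnt_le_countTrue (p : List Bool) (t : ℕ) : cnt p t ≤ countTrue p :=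
  List.Sublist.length_le (List.Sublist.filter _ (p.take_sublist t))

lemma cntF_le_countFalse (p : List Bool) (t : ℕ) : cntF p t ≤ countFalse p :=
  List.Sublist.length_le (List.Sublist.filter _ (p.take_sublist t))

lemma cnt_add_cntF (p : List Bool) {t : ℕ} (ht : t ≤ p.length) :
    cnt p t + cntF p t = t := by
  have := countTrue_add_countFalse (p.take t)
  rwa [List.length_take, min_eq_left ht] at this

lemma cnt_length (p : List Bool) : cnt p p.length = countTrue p := by
  simp [cnt]

lemma cnt_of_le (p : List Bool) {t : ℕ} (h : p.length ≤ t) : cnt p t = countTrue p := by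
  simp [cnt, List.take_of_length_le h]

lemma cnt_add_le (p : List Bool) (t j : ℕ) : cnt p (t + j) ≤ cnt p t + j := by
  induction j with
  | zero => simp
  | succ j ih => rw [← Nat.add_assoc, cnt_succ]; split <;> omega

end CountBasics


lemma countTrue_cons_true (l : List Bool) : countTrue (true :: l) = countTrue l + 1 := by
  simp [countTrue]
lemma countTrue_cons_false (l : List Bool) : countTrue (false :: l) = countTrue l := by
  simp [countTrue]
lemma countFalse_cons_true (l : List Bool) : countFalse (true :: l) = countFalse l := by
  simp [countFalse]
lemma countFalse_cons_false (l : List Bool) : countFalse (false :: l) = countFalse l + 1 := by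
  simp [countFalse]

section ColHeight

lemma colHeight_le (p : List Bool) (k : ℕ) : colHeight p k ≤ countTrue p := by
  induction p generalizing k with
  | nil => simp [colHeight]
  | cons b l ih =>
    cases b
    · cases k with
      | zero => simp [colHeight]
      | succ k =>
        show colHeight l k ≤ _
        rw [countTrue_cons_false]; exact ih k
    · show colHeight l k + 1 ≤ _
      rw [countTrue_cons_true]; have := ih k; omega

lemma colHeight_mono (p : List Bool) {k k' : ℕ} (h : k ≤ k') :
    colHeight p k ≤ colHeight p k' := by
  induction p generalizing k k' with
  | nil => simp [colHeight]
  | cons b l ih =>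
    cases b
    · cases k with
      | zero => cases k' with
        | zero => exact le_refl _
        | succ k' => simp [colHeight]
      | succ k => cases k' with
        | zero => omega
        | succ k' => simp only [colHeight]; exact ih (by omega)
    · simp only [colHeight]; exact Nat.add_le_add_right (ih h) 1

lemma colHeight_spec1 (p : List Bool) (k : ℕ) (hk : k < countFalse p) :
    cnt p (k + colHeight p k) = colHeight p k ∧
    k + colHeight p k < p.length ∧
    p.getD (k + colHeight p k) false = false := by
  induction p generalizing k with
  | nil => simp [countFalse] at hk
  | cons b l ih =>
    cases b
    · cases k with
      | zero =>
        refine ⟨rfl, by simp [colHeight], rfl⟩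
      | succ k =>
        rw [countFalse_cons_false] at hk
        have hcol : colHeight (false :: l) (k + 1) = colHeight l k := rfl
        obtain ⟨h1, h2, h3⟩ := ih k (by omega)
        have harr : k + 1 + colHeight l k = (k + colHeight l k) + 1 := by omega
        rw [hcol, harr]
        refine ⟨?_, by simp; omega, ?_⟩
        · simp only [cnt, List.take_succ_cons, countTrue_cons_false]
          simp only [cnt] at h1; omega
        · simpa [List.getD_cons_succ] using h3
    · rw [countFalse_cons_true] at hk
      have hcol : colHeight (true :: l) k = colHeight l k + 1 := rfl
      obtain ⟨h1, h2, h3⟩ := ih k (by omega)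
      have harr : k + (colHeight l k + 1) = (k + colHeight l k) + 1 := by omega
      rw [hcol, harr]
      refine ⟨?_, by simp; omega, ?_⟩
      · simp only [cnt, List.take_succ_cons, countTrue_cons_true]
        simp only [cnt] at h1; omega
      · simpa [List.getD_cons_succ] using h3

lemma colHeight_spec2 (p : List Bool) (k : ℕ) (hk : countFalse p ≤ k) :
    colHeight p k = countTrue p := by
  induction p generalizing k with
  | nil => simp [colHeight, countTrue]
  | cons b l ih =>
    cases b
    · rw [countFalse_cons_false] at hk
      cases k with
      | zero => omega
      | succ k =>
        have hcol : colHeight (false :: l) (k + 1) = colHeight l k := rfl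
        rw [hcol, ih k (by omega), countTrue_cons_false]
    · rw [countFalse_cons_true] at hk
      have hcol : colHeight (true :: l) k = colHeight l k + 1 := rfl
      rw [hcol, ih k (by omega), countTrue_cons_true]

end ColHeight




section AreaWordCols

def chunkL (a b : Bool) (j : ℕ) : List (ℕ × ℕ) :=
  (if a then [(j,1)] else []) ++ (if b then [] else [(j,0)])

def explicitL : List Bool → List Bool → ℕ → List (ℕ × ℕ)
  | a :: as, b :: bs, j => chunkL a b j ++ explicitL as bs (j+1)
  | _, _, _ => []

def msOf (a b : Bool) : Multiset ℕ := (if a then {1} else 0) + (if b then 0 else {2})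

lemma cnt_cons_succ (b : Bool) (l : List Bool) (t : ℕ) :
    cnt (b :: l) (t + 1) = (if b then 1 else 0) + cnt l t := by
  cases b <;>
    simp [cnt, List.take_succ_cons, countTrue_cons_true, countTrue_cons_false] <;> omega

lemma map_range_succ {α : Type*} (n : ℕ) (F : ℕ → α) :
    (List.range (n+1)).map F = F 0 :: (List.range n).map (fun i => F (i+1)) := by
  rw [List.range_succ_eq_map, List.map_cons, List.map_map]; rfl

lemma levels_TT (u : List Bool) (l : ℕ) :
    levels (true :: false :: u) l = l :: levels u l := rfl
lemma levels_TF (u : List Bool) (l : ℕ) :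
    levels (true :: true :: u) l = l :: (l+1) :: levels u (l+2) := rfl
lemma levels_FF (u : List Bool) (l : ℕ) :
    levels (false :: true :: u) l = (l-1) :: levels u (l-1+1) := rfl
lemma levels_FT (u : List Bool) (l : ℕ) :
    levels (false :: false :: u) l = levels u (l-1-1) := rfl

lemma pairsSpec : ∀ (r g : List Bool) (p j0 : ℕ),
    (∀ t, cnt g t ≤ p + cnt r t) →
    (List.range (levels (interlace r g) (1 + 2*p)).length).map
      (fun i => ((j0 + p + i) - ((levels (interlace r g) (1 + 2*p)).getD i 0)/2,
                 ((levels (interlace r g) (1 + 2*p)).getD i 0) % 2))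
      = explicitL r g j0
  | [], g, p, j0, _ => by simp [interlace, levels, explicitL]
  | a :: as, [], p, j0, _ => by cases a <;> simp [interlace, levels, explicitL]
  | true :: as, true :: bs, p, j0, hdom => by
    have htr : ∀ t, cnt bs t ≤ p + cnt as t := by
      intro t
      have := hdom (t+1)
      rw [cnt_cons_succ, cnt_cons_succ] at this
      simp at this; omega
    have IH := pairsSpec as bs p (j0+1) htr
    rw [show interlace (true::as) (true::bs) = true :: false :: interlace as bs from rfl,
      levels_TT, List.length_cons, map_range_succ]
    rw [show explicitL (true::as) (true::bs) j0
        = (j0,1) :: explicitL as bs (j0+1) from by simp [explicitL, chunkL]]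
    congr 1
    · simp only [List.getD_cons_zero, Prod.mk.injEq]; omega
    · rw [← IH]
      apply List.map_congr_left
      intro i hi
      simp only [List.getD_cons_succ, Prod.mk.injEq]
      exact ⟨by omega, trivial⟩
  | true :: as, false :: bs, p, j0, hdom => by
    have htr : ∀ t, cnt bs t ≤ (p+1) + cnt as t := by
      intro t
      have := hdom (t+1)
      rw [cnt_cons_succ, cnt_cons_succ] at this
      simp at this; omega
    have IH := pairsSpec as bs (p+1) (j0+1) htr
    rw [show interlace (true::as) (false::bs) = true :: true :: interlace as bs from rfl,
      levels_TF, List.length_cons, List.length_cons, map_range_succ, map_range_succ]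
    rw [show explicitL (true::as) (false::bs) j0
        = (j0,1) :: (j0,0) :: explicitL as bs (j0+1) from by simp [explicitL, chunkL]]
    rw [show (1+2*p)+2 = 1+2*(p+1) from by omega]
    congr 1
    · simp only [List.getD_cons_zero, Prod.mk.injEq]; omega
    congr 1
    · simp only [List.getD_cons_succ, List.getD_cons_zero, Prod.mk.injEq]; omega
    · rw [← IH]
      apply List.map_congr_left
      intro i hi
      simp only [List.getD_cons_succ, Prod.mk.injEq]
      exact ⟨by omega, trivial⟩
  | false :: as, true :: bs, p, j0, hdom => by
    have hp : 1 ≤ p := by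
      have := hdom 1
      rw [cnt_cons_succ, cnt_cons_succ] at this
      simp [cnt_zero] at this; omega
    have htr : ∀ t, cnt bs t ≤ (p-1) + cnt as t := by
      intro t
      have := hdom (t+1)
      rw [cnt_cons_succ, cnt_cons_succ] at this
      simp at this; omega
    have IH := pairsSpec as bs (p-1) (j0+1) htr
    rw [show interlace (false::as) (true::bs) = false :: false :: interlace as bs from rfl,
      levels_FT]
    rw [show explicitL (false::as) (true::bs) j0
        = explicitL as bs (j0+1) from by simp [explicitL, chunkL]]
    rw [show (1+2*p)-1-1 = 1+2*(p-1) from by omega]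
    rw [← IH]
    apply List.map_congr_left
    intro i hi
    simp only [Prod.mk.injEq]
    exact ⟨by omega, trivial⟩
  | false :: as, false :: bs, p, j0, hdom => by
    have htr : ∀ t, cnt bs t ≤ p + cnt as t := by
      intro t
      have := hdom (t+1)
      rw [cnt_cons_succ, cnt_cons_succ] at this
      simp at this; omega
    have IH := pairsSpec as bs p (j0+1) htr
    rw [show interlace (false::as) (false::bs) = false :: true :: interlace as bs from rfl,
      levels_FF, List.length_cons, map_range_succ]
    rw [show explicitL (false::as) (false::bs) j0
        = (j0,0) :: explicitL as bs (j0+1) from by simp [explicitL, chunkL]]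
    rw [show (1+2*p)-1+1 = 1+2*p from by omega]
    congr 1
    · simp only [List.getD_cons_zero, Prod.mk.injEq]; omega
    · rw [← IH]
      apply List.map_congr_left
      intro i hi
      simp only [List.getD_cons_succ, Prod.mk.injEq]
      exact ⟨by omega, trivial⟩

end AreaWordCols


section PsiColsEq

lemma filterMapComm {α β : Type*} (f : α → β) (p : β → Bool) :
    ∀ l : List α, (l.map f).filter p = (l.filter (fun a => p (f a))).map f := by
  intro l
  induction l with
  | nil => rfl
  | cons a l ih =>
    by_cases h : p (f a) = true
    · simp [List.filter_cons, h, ih]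
    · simp only [Bool.not_eq_true] at h
      simp [List.filter_cons, h, ih]

lemma filter_map_getD {α β : Type*} (d : α) (p : α → Bool) (f : α → β) :
    ∀ E : List α,
    ((List.range E.length).filter (fun i => p (E.getD i d))).map (fun i => f (E.getD i d))
      = (E.filter p).map f := by
  intro E
  induction E with
  | nil => rfl
  | cons e E ih =>
    simp only [List.length_cons, List.range_succ_eq_map, List.filter_cons,
      List.getD_cons_zero, filterMapComm Nat.succ, List.map_map, Function.comp,
      Nat.succ_eq_add_one, List.getD_cons_succ]
    by_cases h : p e = true
    · simp only [h, if_pos trivial, List.map_cons, List.getD_cons_zero, List.map_map]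
      simp only [Function.comp_def, Nat.succ_eq_add_one, List.getD_cons_succ]
      rw [ih]
    · simp only [Bool.not_eq_true] at h
      simp only [h, List.filter_cons, Bool.false_eq_true, if_false, List.map_map]
      simp only [Function.comp_def, Nat.succ_eq_add_one, List.getD_cons_succ]
      rw [ih]

lemma chunk_fst (a b : Bool) (j : ℕ) : ∀ e ∈ chunkL a b j, e.1 = j := by
  intro e he
  cases a <;> cases b
  · simp [chunkL] at he; rw [he]
  · simp [chunkL] at he
  · simp [chunkL] at he; rcases he with rfl | rfl <;> rfl
  · simp [chunkL] at he; rw [he]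

lemma explicit_fst_ge : ∀ (r g : List Bool) (j0 : ℕ) (e : ℕ × ℕ),
    e ∈ explicitL r g j0 → j0 ≤ e.1
  | a :: as, b :: bs, j0, e, he => by
    rw [show explicitL (a::as) (b::bs) j0 = chunkL a b j0 ++ explicitL as bs (j0+1) from rfl,
      List.mem_append] at he
    rcases he with h | h
    · rw [chunk_fst a b j0 e h]
    · have := explicit_fst_ge as bs (j0+1) e h; omega
  | [], _, _, _, h => by simp [explicitL] at h
  | _ :: _, [], _, _, h => by simp [explicitL] at h

lemma explicit_filter : ∀ (r g : List Bool) (c j0 : ℕ),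
    c < r.length → c < g.length →
    (explicitL r g j0).filter (fun e => e.1 = j0 + c)
      = chunkL (r.getD c false) (g.getD c false) (j0 + c)
  | a :: as, b :: bs, 0, j0, _, _ => by
    rw [show explicitL (a::as) (b::bs) j0 = chunkL a b j0 ++ explicitL as bs (j0+1) from rfl,
      List.filter_append]
    have h1 : (chunkL a b j0).filter (fun e => e.1 = j0 + 0) = chunkL a b j0 := by
      cases a <;> cases b <;> simp [chunkL]
    have h2 : (explicitL as bs (j0+1)).filter (fun e => e.1 = j0 + 0) = [] := by
      apply List.filter_eq_nil_iff.mpr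
      intro e he
      have := explicit_fst_ge as bs (j0+1) e he
      simp; omega
    rw [h1, h2, List.append_nil]
    simp [List.getD_cons_zero]
  | a :: as, b :: bs, c+1, j0, hr, hg => by
    rw [show explicitL (a::as) (b::bs) j0 = chunkL a b j0 ++ explicitL as bs (j0+1) from rfl,
      List.filter_append]
    have h1 : (chunkL a b j0).filter (fun e => e.1 = j0 + (c+1)) = [] := by
      cases a <;> cases b <;> simp [chunkL] <;> omega
    have h2 := explicit_filter as bs c (j0+1) (by simpa using hr) (by simpa using hg)
    rw [h1, List.nil_append]
    rw [show j0 + (c+1) = (j0+1) + c from by omega, h2]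
    simp [List.getD_cons_succ]
  | [], _, c, _, hr, _ => by simp at hr
  | _ :: _, [], c, _, _, hg => by simp at hg

lemma chunk_map_msOf (a b : Bool) (j : ℕ) :
    (((chunkL a b j).map (fun e => if e.2 = 1 then (1:ℕ) else 2) : List ℕ) : Multiset ℕ)
      = msOf a b := by
  cases a <;> cases b <;> simp [chunkL, msOf] <;> rfl

lemma psiCols_eq (r g : List Bool)
    (hdom : ∀ t, cnt g t ≤ cnt r t)
    (hNr : (levels (interlace r g) 1).length ≤ r.length)
    (hNg : (levels (interlace r g) 1).length ≤ g.length) :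
    psiCols r g = (List.range (levels (interlace r g) 1).length).map
      (fun c => msOf (r.getD c false) (g.getD c false)) := by
  have hE := pairsSpec r g 0 0 (by simpa using hdom)
  simp only [Nat.mul_zero, Nat.add_zero, Nat.zero_add] at hE
  set w : List ℕ := levels (interlace r g) 1 with hw
  set E := explicitL r g 0 with hEdef
  set N := w.length with hN
  have hElen : E.length = N := by rw [← hE]; simp
  have hgetD : ∀ i, i < N → (i - (w.getD i 0)/2, (w.getD i 0) % 2) = E.getD i ((0:ℕ),(0:ℕ)) := by
    intro i hi
    have hiE : i < E.length := by omega
    have h1 : E[i] = (List.map (fun i => (i - w.getD i 0 / 2, w.getD i 0 % 2))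
        (List.range N))[i]'(by rw [hE]; exact hiE) := List.getElem_of_eq hE.symm hiE
    rw [List.getD_eq_getElem _ _ hiE, h1]
    simp
  have htail : (areaWordR r g).tail = w := rfl
  unfold psiCols
  rw [htail]
  apply List.map_congr_left
  intro c hc
  rw [List.mem_range] at hc
  -- convert the Finset/Multiset expression into a List expression
  have hval : (Finset.filter (fun i => i - (w.getD i 0)/2 = c) (Finset.range N)).val
      = ((List.range N).filter (fun i => decide (i - (w.getD i 0)/2 = c)) : List ℕ) := by
    rfl
  rw [hval]
  rw [show ∀ l : List ℕ, Multiset.map (fun i => if (w.getD i 0) % 2 = 1 then (1:ℕ) else 2) (l : Multiset ℕ)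
      = ((l.map (fun i => if (w.getD i 0) % 2 = 1 then (1:ℕ) else 2) : List ℕ) : Multiset ℕ) from
    fun l => rfl]
  have hfilt : (List.range N).filter (fun i => decide (i - (w.getD i 0)/2 = c))
      = (List.range N).filter (fun i => decide ((E.getD i ((0:ℕ),(0:ℕ))).1 = c)) := by
    apply List.filter_congr
    intro i hi
    rw [List.mem_range] at hi
    rw [← hgetD i hi]
  rw [hfilt]
  have hmap : ((List.range N).filter (fun i => decide ((E.getD i ((0:ℕ),(0:ℕ))).1 = c))).map
        (fun i => if (w.getD i 0) % 2 = 1 then (1:ℕ) else 2)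
      = ((List.range N).filter (fun i => decide ((E.getD i ((0:ℕ),(0:ℕ))).1 = c))).map
        (fun i => if (E.getD i ((0:ℕ),(0:ℕ))).2 = 1 then (1:ℕ) else 2) := by
    apply List.map_congr_left
    intro i hi
    rw [List.mem_filter, List.mem_range] at hi
    rw [← hgetD i hi.1]
  rw [hmap]
  rw [← hElen]
  rw [filter_map_getD ((0:ℕ),(0:ℕ)) (fun e => decide (e.1 = c)) (fun e => if e.2 = 1 then (1:ℕ) else 2) E]
  rw [hEdef]
  rw [show (fun (e : ℕ × ℕ) => decide (e.1 = c)) = (fun (e : ℕ × ℕ) => decide (e.1 = 0 + c)) from by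
    funext e; simp]
  rw [explicit_filter r g c 0 (by omega) (by omega)]
  rw [show (0:ℕ) + c = c from by omega]
  exact chunk_map_msOf _ _ c

end PsiColsEq


section MultisetSteps

open Multiset

local notation "R" => Multiset.replicate

lemma repl_add_cons (a : ℕ) (s t : Multiset ℕ) : s + (a ::ₘ t) = a ::ₘ (s + t) := by
  rw [Multiset.add_cons]

lemma m_erase2 (a b : ℕ) (hb : 1 ≤ b) :
    (R a 1 + R b 2 : Multiset ℕ).erase 2 = R a 1 + R (b-1) 2 := by
  obtain ⟨b', rfl⟩ : ∃ b', b = b' + 1 := ⟨b - 1, by omega⟩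
  rw [Multiset.replicate_succ, repl_add_cons, Multiset.erase_cons_head]
  simp

lemma m_erase1 (a b : ℕ) (ha : 1 ≤ a) :
    (R a 1 + R b 2 : Multiset ℕ).erase 1 = R (a-1) 1 + R b 2 := by
  obtain ⟨a', rfl⟩ : ∃ a', a = a' + 1 := ⟨a - 1, by omega⟩
  rw [Multiset.replicate_succ, Multiset.cons_add, Multiset.erase_cons_head]
  simp

lemma m_sup_repl (k x : ℕ) : (R k x : Multiset ℕ).sup = if k = 0 then 0 else x := by
  induction k with
  | zero => simp
  | succ k ih =>
    rw [Multiset.replicate_succ, Multiset.sup_cons, ih]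
    by_cases h : k = 0 <;> simp [h]

lemma m_sup (a b : ℕ) :
    (R a 1 + R b 2 : Multiset ℕ).sup = if b ≠ 0 then 2 else if a ≠ 0 then 1 else 0 := by
  rw [Multiset.sup_add, m_sup_repl, m_sup_repl]
  by_cases hb : b = 0 <;> by_cases ha : a = 0 <;> simp [ha, hb]

lemma m_filter_repl (p : ℕ → Prop) [DecidablePred p] (k x : ℕ) :
    Multiset.filter p (R k x) = if p x then R k x else 0 := by
  induction k with
  | zero => simp
  | succ k ih =>
    rw [Multiset.replicate_succ, Multiset.filter_cons, ih]
    by_cases h : p x <;> simp [h, Multiset.replicate_succ]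

lemma m_filter_le1 (a b : ℕ) :
    Multiset.filter (fun x => x ≤ 1) (R a 1 + R b 2 : Multiset ℕ) = R a 1 := by
  rw [Multiset.filter_add, m_filter_repl, m_filter_repl]
  norm_num

lemma m_filter_le2 (a b : ℕ) :
    Multiset.filter (fun x => x ≤ 2) (R a 1 + R b 2 : Multiset ℕ) = R a 1 + R b 2 := by
  rw [Multiset.filter_add, m_filter_repl, m_filter_repl]
  norm_num

lemma m_eq_zero (a b : ℕ) : (R a 1 + R b 2 : Multiset ℕ) = 0 ↔ a = 0 ∧ b = 0 := by
  constructor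
  · intro h
    have h1 := congrArg Multiset.card h
    simp at h1
    omega
  · rintro ⟨rfl, rfl⟩; simp

lemma msOf_repl (x y : Bool) :
    msOf x y = R (if x then 1 else 0) 1 + R (if y then 0 else 1) 2 := by
  cases x <;> cases y <;> simp [msOf] <;> rfl

-- step lemmas for pmajGo
lemma pmajGo_cons (col : Multiset ℕ) (rest : List (Multiset ℕ)) (C : Multiset ℕ) (wp : ℕ) :
    pmajGo (col :: rest) C (some wp) =
      (if (C.erase wp + col).filter (fun x => x ≤ wp) = 0 then (C.erase wp + col).sup
       else ((C.erase wp + col).filter (fun x => x ≤ wp)).sup)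
        :: pmajGo rest (C.erase wp + col)
          (some (if (C.erase wp + col).filter (fun x => x ≤ wp) = 0 then (C.erase wp + col).sup
                 else ((C.erase wp + col).filter (fun x => x ≤ wp)).sup)) := rfl

lemma step2_2 (a b da db : ℕ) (rest : List (Multiset ℕ)) (col : Multiset ℕ)
    (hcol : col = R da 1 + R db 2) (hb : 1 ≤ b) (hb' : 1 ≤ b - 1 + db) :
    pmajGo (col :: rest) (R a 1 + R b 2) (some 2)
      = 2 :: pmajGo rest (R (a+da) 1 + R (b-1+db) 2) (some 2) := by
  have hC : (R a 1 + R b 2 : Multiset ℕ).erase 2 + col = R (a+da) 1 + R (b-1+db) 2 := by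
    rw [hcol, m_erase2 a b hb, Multiset.replicate_add, Multiset.replicate_add]
    abel
  rw [pmajGo_cons, hC, m_filter_le2]
  rw [if_neg (by rw [m_eq_zero]; omega)]
  rw [m_sup, if_pos (by omega)]

lemma step2_1 (a b da db : ℕ) (rest : List (Multiset ℕ)) (col : Multiset ℕ)
    (hcol : col = R da 1 + R db 2) (hb : 1 ≤ b) (hb' : b - 1 + db = 0) (ha : 1 ≤ a + da) :
    pmajGo (col :: rest) (R a 1 + R b 2) (some 2)
      = 1 :: pmajGo rest (R (a+da) 1 + R (b-1+db) 2) (some 1) := by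
  have hC : (R a 1 + R b 2 : Multiset ℕ).erase 2 + col = R (a+da) 1 + R (b-1+db) 2 := by
    rw [hcol, m_erase2 a b hb, Multiset.replicate_add, Multiset.replicate_add]
    abel
  rw [pmajGo_cons, hC, m_filter_le2]
  rw [if_neg (by rw [m_eq_zero]; omega)]
  rw [m_sup, if_neg (by omega), if_pos (by omega)]

lemma step1_1 (a b da db : ℕ) (rest : List (Multiset ℕ)) (col : Multiset ℕ)
    (hcol : col = R da 1 + R db 2) (ha : 1 ≤ a) (ha' : 1 ≤ a - 1 + da) :
    pmajGo (col :: rest) (R a 1 + R b 2) (some 1)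
      = 1 :: pmajGo rest (R (a-1+da) 1 + R (b+db) 2) (some 1) := by
  have hC : (R a 1 + R b 2 : Multiset ℕ).erase 1 + col = R (a-1+da) 1 + R (b+db) 2 := by
    rw [hcol, m_erase1 a b ha, Multiset.replicate_add, Multiset.replicate_add]
    abel
  rw [pmajGo_cons, hC, m_filter_le1]
  rw [if_neg (by intro hc; have := congrArg Multiset.card hc; simp at this; omega)]
  rw [m_sup_repl, if_neg (by omega)]

lemma step1_2 (a b da db : ℕ) (rest : List (Multiset ℕ)) (col : Multiset ℕ)
    (hcol : col = R da 1 + R db 2) (ha : 1 ≤ a) (ha' : a - 1 + da = 0) (hb : 1 ≤ b + db) :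
    pmajGo (col :: rest) (R a 1 + R b 2) (some 1)
      = 2 :: pmajGo rest (R (a-1+da) 1 + R (b+db) 2) (some 2) := by
  have hC : (R a 1 + R b 2 : Multiset ℕ).erase 1 + col = R (a-1+da) 1 + R (b+db) 2 := by
    rw [hcol, m_erase1 a b ha, Multiset.replicate_add, Multiset.replicate_add]
    abel
  rw [pmajGo_cons, hC, m_filter_le1]
  rw [if_pos (by rw [show a - 1 + da = 0 from ha']; simp)]
  rw [m_sup, if_pos (by omega)]

lemma pmajGo_none (cols : List (Multiset ℕ)) (h : ∀ col ∈ cols, ∀ x ∈ col, x ≤ 2) :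
    pmajGo cols 0 none = pmajGo cols 0 (some 2) := by
  cases cols with
  | nil => rfl
  | cons col rest =>
    have h0 : (0 : Multiset ℕ).erase 2 = 0 := rfl
    show (((0:Multiset ℕ) + col).sup :: _) = _
    rw [pmajGo_cons, h0]
    have hfil : Multiset.filter (fun x => x ≤ 2) ((0:Multiset ℕ) + col) = (0:Multiset ℕ) + col := by
      rw [Multiset.filter_eq_self]
      intro x hx
      exact h col (by simp) x (by simpa using hx)
    rw [hfil]
    by_cases hc : (0:Multiset ℕ) + col = 0
    · rw [if_pos hc]
    · rw [if_neg hc]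

end MultisetSteps


section MajMachinery

def Cd : List ℕ → ℕ
  | a :: b :: t => (if b < a then 1 else 0) + Cd (b :: t)
  | _ => 0

def Dd : List ℕ → ℕ
  | a :: l => Dd l + Cd (a :: l)
  | [] => 0

lemma Cd_count : ∀ l : List ℕ,
    Cd l = ∑ i ∈ Finset.range (l.length - 1), (if l.getD (i+1) 0 < l.getD i 0 then 1 else 0)
  | [] => by simp [Cd]
  | [a] => by simp [Cd]
  | a :: b :: t => by
    have ih := Cd_count (b :: t)
    show (if b < a then 1 else 0) + Cd (b :: t) = _
    rw [ih]
    rw [show (a :: b :: t).length - 1 = ((b :: t).length - 1) + 1 from by simp]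
    rw [Finset.sum_range_succ']
    simp only [List.getD_cons_succ, List.getD_cons_zero]
    omega

lemma majL_cons (a : ℕ) (l : List ℕ) : majL (a :: l) = majL l + Cd (a :: l) := by
  cases l with
  | nil => simp [majL, Cd]
  | cons b t =>
    unfold majL
    rw [show (a :: b :: t).length - 1 = ((b :: t).length - 1) + 1 from by simp]
    rw [Finset.sum_range_succ']
    simp only [List.getD_cons_succ, List.getD_cons_zero]
    rw [Cd_count (a :: b :: t)]
    rw [show (a :: b :: t).length - 1 = ((b :: t).length - 1) + 1 from by simp]
    rw [Finset.sum_range_succ']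
    simp only [List.getD_cons_succ, List.getD_cons_zero]
    have key : (∑ x ∈ Finset.range ((b :: t).length - 1),
          if t.getD x 0 < (b :: t).getD x 0 then x + 1 + 1 else 0)
        = (∑ x ∈ Finset.range ((b :: t).length - 1),
          ((if t.getD x 0 < (b :: t).getD x 0 then x + 1 else 0)
            + (if t.getD x 0 < (b :: t).getD x 0 then 1 else 0))) :=
      Finset.sum_congr rfl (fun i _ => by split <;> omega)
    rw [key, Finset.sum_add_distrib]
    simp only [Nat.zero_add]
    omega

lemma majL_eq_Dd : ∀ l : List ℕ, majL l = Dd l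
  | [] => by simp [majL, Dd]
  | a :: l => by
    rw [majL_cons, majL_eq_Dd l]
    rfl

lemma Cd_append' : ∀ (X : List ℕ) (a : ℕ) (Y : List ℕ),
    Cd (X ++ a :: Y) = Cd (X ++ [a]) + Cd (a :: Y)
  | [], a, Y => by simp [Cd]
  | [x], a, Y => by
    show (if a < x then 1 else 0) + Cd (a :: Y) = ((if a < x then 1 else 0) + Cd [a]) + Cd (a :: Y)
    simp [Cd]
  | x :: x' :: X, a, Y => by
    have ih := Cd_append' (x' :: X) a Y
    show (if x' < x then 1 else 0) + Cd ((x' :: X) ++ a :: Y) = _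
    rw [ih]
    show _ = (if x' < x then 1 else 0) + Cd ((x' :: X) ++ [a]) + Cd (a :: Y)
    omega

lemma Dd_append' : ∀ (X : List ℕ) (a : ℕ) (Y : List ℕ),
    Dd (X ++ a :: Y) = Dd (X ++ [a]) + Dd (a :: Y) + X.length * Cd (a :: Y)
  | [], a, Y => by simp [Dd, Cd]
  | x :: X, a, Y => by
    have ih := Dd_append' X a Y
    show Dd (X ++ a :: Y) + Cd (x :: (X ++ a :: Y)) = _
    rw [ih, show x :: (X ++ a :: Y) = (x :: X) ++ a :: Y from rfl, Cd_append' (x :: X) a Y]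
    show _ = Dd (X ++ [a]) + Cd ((x :: X) ++ [a]) + Dd (a :: Y) + (X.length + 1) * Cd (a :: Y)
    ring_nf

lemma Cd_snoc : ∀ (X : List ℕ) (a : ℕ),
    Cd (X ++ [a]) = Cd X + (if a < X.getLastD a then 1 else 0)
  | [], a => by simp [Cd]
  | [x], a => by simp [Cd, List.getLastD]; exact if_congr Iff.rfl rfl rfl
  | x :: x' :: X, a => by
    have ih := Cd_snoc (x' :: X) a
    show (if x' < x then 1 else 0) + Cd ((x' :: X) ++ [a]) = _
    rw [ih]
    show _ = (if x' < x then 1 else 0) + Cd (x' :: X) + _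
    rw [show (x :: x' :: X).getLastD a = (x' :: X).getLastD a from by simp [List.getLastD]]
    omega

lemma Dd_snoc : ∀ (X : List ℕ) (a : ℕ),
    Dd (X ++ [a]) = Dd X + (if a < X.getLastD a then X.length else 0)
  | [], a => by simp [Dd, Cd]
  | x :: X, a => by
    have ih := Dd_snoc X a
    show Dd (X ++ [a]) + Cd (x :: (X ++ [a])) = _
    rw [ih, show x :: (X ++ [a]) = (x :: X) ++ [a] from rfl, Cd_snoc (x :: X) a]
    show _ = Dd X + Cd (x :: X) + (if a < (x :: X).getLastD a then X.length + 1 else 0)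
    cases X with
    | nil => simp [Cd, List.getLastD]; exact if_congr Iff.rfl rfl rfl
    | cons y Y =>
      rw [show (x :: y :: Y).getLastD a = (y :: Y).getLastD a from by simp [List.getLastD]]
      split <;> omega

lemma Cd_12 : ∀ (k : ℕ) (b : ℕ), Cd (List.replicate k 1 ++ List.replicate b 2) = 0 := by
  intro k
  induction k with
  | zero =>
    intro b
    cases b with
    | zero => simp [Cd]
    | succ b =>
      induction b with
      | zero => simp [Cd]
      | succ b ihb =>
        show Cd (2 :: 2 :: List.replicate b 2) = 0
        show (if (2:ℕ) < 2 then 1 else 0) + Cd (2 :: List.replicate b 2) = 0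
        simpa [List.replicate_succ] using ihb
  | succ k ih =>
    intro b
    cases k with
    | zero =>
      cases b with
      | zero => simp [Cd]
      | succ b =>
        show (if (2:ℕ) < 1 then 1 else 0) + Cd (2 :: List.replicate b 2) = 0
        have := ih (b+1)
        simpa [List.replicate_succ] using this
    | succ k' =>
      show (if (1:ℕ) < 1 then 1 else 0) + Cd (List.replicate (k'+1) 1 ++ List.replicate b 2) = 0
      simpa using ih b

lemma Dd_12 : ∀ (k b : ℕ), Dd (List.replicate k 1 ++ List.replicate b 2) = 0 := by
  intro k
  induction k with
  | zero =>
    intro b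
    induction b with
    | zero => simp [Dd]
    | succ b ihb =>
      show Dd (List.replicate b 2) + Cd (2 :: List.replicate b 2) = 0
      have h1' : Cd (2 :: List.replicate b 2) = 0 := by
        have h1 := Cd_12 0 (b+1)
        simpa [List.replicate_succ] using h1
      rw [h1']
      simpa using ihb
  | succ k ih =>
    intro b
    show Dd (List.replicate k 1 ++ List.replicate b 2) + Cd (List.replicate (k+1) 1 ++ List.replicate b 2) = 0
    rw [ih b, Cd_12 (k+1) b]

end MajMachinery


section BounceWord

def wordOf : List ℕ → List ℕ
  | e :: n :: rest => List.replicate e 2 ++ List.replicate n 1 ++ wordOf rest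
  | _ => []

def statSum : ℕ → List ℕ → ℕ
  | k, e :: n :: rest => k * (e + n) + statSum (k+1) rest
  | k, [e] => k * e
  | _, [] => 0

def AltP : List ℕ → Prop
  | _ :: n :: rest => (match rest with
      | [] => True
      | e' :: _ => 0 < n ∧ 0 < e') ∧ AltP rest
  | [_] => False
  | [] => True

lemma statSum_succ : ∀ (l : List ℕ) (k : ℕ), statSum (k+1) l = statSum k l + l.sum
  | [], k => by simp [statSum]
  | [e], k => by simp [statSum]; ring
  | e :: n :: rest, k => by
    show (k+1) * (e + n) + statSum (k+2) rest = k * (e+n) + statSum (k+1) rest + (e + (n + rest.sum))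
    rw [statSum_succ rest (k+1)]
    ring

lemma wordOf_length : ∀ l : List ℕ, AltP l → (wordOf l).length = l.sum
  | [], _ => by simp [wordOf]
  | [e], h => by exact absurd h (by simp [AltP])
  | e :: n :: rest, h => by
    show (List.replicate e 2 ++ List.replicate n 1 ++ wordOf rest).length = e + (n + rest.sum)
    rw [List.length_append, List.length_append, List.length_replicate, List.length_replicate,
      wordOf_length rest h.2]
    ring

lemma getLastD_concat {α : Type*} (a d : α) : ∀ X : List α, (X ++ [a]).getLastD d = a
  | [] => rfl
  | x :: X => by
    rw [List.cons_append, List.getLastD_cons, getLastD_concat a x X]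

lemma Dd_wordOf : ∀ runs : List ℕ, AltP runs → Dd ((wordOf runs).reverse) = statSum 0 runs
  | [], _ => by simp [wordOf, Dd, statSum]
  | [e], h => by exact absurd h (by simp [AltP])
  | e :: n :: rest, h => by
    obtain ⟨hhead, htail⟩ := h
    rw [show wordOf (e :: n :: rest)
        = List.replicate e 2 ++ List.replicate n 1 ++ wordOf rest from rfl]
    rw [List.reverse_append, List.reverse_append, List.reverse_replicate, List.reverse_replicate]
    -- now : (wordOf rest).reverse ++ (replicate n 1 ++ replicate e 2)
    cases hr : rest with
    | nil =>
      subst hr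
      show Dd ((wordOf ([]:List ℕ)).reverse ++ (List.replicate n 1 ++ List.replicate e 2))
        = statSum 0 [e, n]
      rw [show (wordOf ([]:List ℕ)).reverse = ([]:List ℕ) from rfl, List.nil_append, Dd_12]
      simp [statSum]
    | cons e' rest' =>
      subst hr
      obtain ⟨hn, he'⟩ := hhead
      obtain ⟨n', rfl⟩ : ∃ n'', n = n'' + 1 := ⟨n - 1, by omega⟩
      have hX2 : ∃ Z, (wordOf (e' :: rest')).reverse = Z ++ [2] := by
        cases rest' with
        | nil => exact absurd htail (by simp [AltP])
        | cons n'' rest'' =>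
          obtain ⟨e'', rfl⟩ : ∃ e''', e' = e''' + 1 := ⟨e' - 1, by omega⟩
          refine ⟨(List.replicate e'' 2 ++ List.replicate n'' 1 ++ wordOf rest'').reverse, ?_⟩
          rw [show wordOf ((e''+1) :: n'' :: rest'')
              = List.replicate (e''+1) 2 ++ List.replicate n'' 1 ++ wordOf rest'' from rfl]
          rw [show List.replicate (e''+1) 2 = 2 :: List.replicate e'' 2 from rfl]
          simp
      obtain ⟨Z, hZ⟩ := hX2
      rw [hZ]
      rw [show List.replicate (n'+1) 1 ++ List.replicate e 2
          = 1 :: (List.replicate n' 1 ++ List.replicate e 2) from rfl]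
      rw [Dd_append' (Z ++ [2]) 1 (List.replicate n' 1 ++ List.replicate e 2)]
      have hC0 : Cd (1 :: (List.replicate n' 1 ++ List.replicate e 2)) = 0 := by
        have := Cd_12 (n'+1) e
        rwa [show List.replicate (n'+1) 1 = 1 :: List.replicate n' 1 from rfl,
          List.cons_append] at this
      have hD0 : Dd (1 :: (List.replicate n' 1 ++ List.replicate e 2)) = 0 := by
        have := Dd_12 (n'+1) e
        rwa [show List.replicate (n'+1) 1 = 1 :: List.replicate n' 1 from rfl,
          List.cons_append] at this
      rw [hC0, hD0]
      rw [Dd_snoc (Z ++ [2]) 1]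
      rw [getLastD_concat]
      rw [if_pos (by norm_num)]
      have hIH := Dd_wordOf (e' :: rest') htail
      rw [hZ] at hIH
      have hlen : (Z ++ [2]).length = (e' :: rest').sum := by
        rw [← hZ, List.length_reverse, wordOf_length _ htail]
      rw [hlen, hIH]
      rw [show statSum 0 ((e:ℕ) :: (n'+1) :: e' :: rest')
          = 0 * (e + (n'+1)) + statSum 1 (e'::rest') from rfl]
      rw [statSum_succ (e'::rest') 0]
      ring

end BounceWord


section SumConv

lemma sumconv : ∀ (l : List ℕ) (k : ℕ),
    (∑ j ∈ Finset.range l.length, ((j + 2*k)/2) * l.getD j 0) = statSum k l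
  | [], k => by simp [statSum]
  | [e], k => by
    rw [show ([e]:List ℕ).length = 1 from rfl, Finset.sum_range_one]
    show (0 + 2*k)/2 * ([e]:List ℕ).getD 0 0 = statSum k [e]
    rw [show (([e]:List ℕ).getD 0 0) = e from rfl, show statSum k [e] = k * e from rfl]
    congr 1
    omega
  | e :: n :: rest, k => by
    rw [show (e :: n :: rest).length = rest.length + 1 + 1 from rfl]
    rw [Finset.sum_range_succ']
    rw [Finset.sum_range_succ']
    simp only [List.getD_cons_succ, List.getD_cons_zero]
    rw [show ∀ S : ℕ, S + (0 + 1 + 2*k)/2 * n + (0 + 2*k)/2 * e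
        = S + (k * (e + n)) from fun S => by
      have h1 : (0 + 1 + 2*k)/2 = k := by omega
      have h2 : (0 + 2*k)/2 = k := by omega
      rw [h1, h2]; ring]
    have hcongr : (∑ j ∈ Finset.range rest.length, ((j + 1 + 1 + 2*k)/2) * rest.getD j 0)
        = ∑ j ∈ Finset.range rest.length, ((j + 2*(k+1))/2) * rest.getD j 0 := by
      apply Finset.sum_congr rfl
      intro j _
      congr 1
      omega
    rw [hcongr, sumconv rest (k+1)]
    show statSum (k+1) rest + k * (e+n) = k * (e + n) + statSum (k+1) rest
    ring

end SumConv


section Geometry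

lemma countTrue_map_not : ∀ l : List Bool, countTrue (l.map (fun b => !b)) = countFalse l
  | [] => rfl
  | b :: l => by
    cases b <;>
      simp [countTrue_cons_true, countTrue_cons_false, countFalse_cons_true,
        countFalse_cons_false, countTrue_map_not l]

lemma cnt_map_not (l : List Bool) (t : ℕ) : cnt (l.map (fun b => !b)) t = cntF l t := by
  unfold cnt cntF
  rw [← List.map_take, countTrue_map_not]

lemma drops_mono (p : List Bool) : ∀ {t t' : ℕ}, t ≤ t' → t - cnt p t ≤ t' - cnt p t' := by
  intro t t' h
  induction t' with
  | zero => omega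
  | succ t' ih =>
    rcases Nat.eq_or_lt_of_le h with rfl | h'
    · omega
    · have h1 := ih (by omega)
      have h2 := cnt_succ p t'
      have h3 := cnt_add_le p t' 1
      split at h2 <;> omega

variable {r g : List Bool} {m n : ℕ}

structure PolyoData (r g : List Bool) (m n : ℕ) : Prop where
  hrl : r.length = m + n
  hgl : g.length = m + n
  hrt : countTrue r = n
  hgt : countTrue g = n
  hdom : ∀ i, cnt g i ≤ cnt r i

lemma PolyoData.of_h (h : IsRPolyo m n r g) : PolyoData r g m n :=
  ⟨h.1, h.2.1, h.2.2.1, h.2.2.2.1, h.2.2.2.2⟩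

lemma PolyoData.hrf (P : PolyoData r g m n) : countFalse r = m := by
  have := countTrue_add_countFalse r; rw [P.hrl, P.hrt] at this; omega

lemma PolyoData.hgf (P : PolyoData r g m n) : countFalse g = m := by
  have := countTrue_add_countFalse g; rw [P.hgl, P.hgt] at this; omega

lemma gSpec1 (P : PolyoData r g m n) {y : ℕ} (hy : y < n) :
    cnt g (y + colX g y) = y ∧ y + colX g y < m + n ∧ g.getD (y + colX g y) false = true := by
  have hcf : countFalse (g.map (fun b => !b)) = countTrue g := by
    have h1 := countTrue_map_not g
    have h2 := countTrue_add_countFalse (g.map (fun b => !b))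
    have h3 := countTrue_add_countFalse g
    simp only [List.length_map] at h2
    omega
  have hk : y < countFalse (g.map (fun b => !b)) := by rw [hcf, P.hgt]; exact hy
  obtain ⟨h1, h2, h3⟩ := colHeight_spec1 (g.map (fun b => !b)) y hk
  rw [List.length_map, P.hgl] at h2
  rw [cnt_map_not] at h1
  set X := colHeight (g.map (fun b => !b)) y with hX
  have hgoalX : colX g y = X := rfl
  rw [hgoalX]
  have hlen : y + X ≤ g.length := by rw [P.hgl]; omega
  have hc := cnt_add_cntF g hlen
  refine ⟨by omega, by omega, ?_⟩
  have hidx : y + X < g.length := by rw [P.hgl]; exact h2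
  have hmap : (g.map (fun b => !b)).getD (y + X) false = !(g.getD (y + X) false) := by
    rw [List.getD_eq_getElem _ _ (by rw [List.length_map]; exact hidx),
        List.getD_eq_getElem _ _ hidx]
    simp
  rw [hmap] at h3
  cases hgd : g.getD (y + X) false
  · rw [hgd] at h3; simp at h3
  · rfl

lemma gSpec2 (P : PolyoData r g m n) {y : ℕ} (hy : n ≤ y) : colX g y = m := by
  unfold colX
  have hcf : countFalse (g.map (fun b => !b)) = countTrue g := by
    have h1 := countTrue_map_not g
    have h2 := countTrue_add_countFalse (g.map (fun b => !b))
    have h3 := countTrue_add_countFalse g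
    simp only [List.length_map] at h2
    omega
  rw [colHeight_spec2 _ _ (by rw [hcf, P.hgt]; omega), countTrue_map_not, P.hgf]

lemma rSpec1 (P : PolyoData r g m n) {x : ℕ} (hx : x < m) :
    cnt r (x + colHeight r x) = colHeight r x ∧ x + colHeight r x < m + n ∧
      r.getD (x + colHeight r x) false = false := by
  obtain ⟨h1, h2, h3⟩ := colHeight_spec1 r x (by rw [P.hrf]; omega)
  exact ⟨h1, P.hrl ▸ h2, h3⟩

lemma rSpec2 (P : PolyoData r g m n) {x : ℕ} (hx : m ≤ x) : colHeight r x = n := by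
  rw [colHeight_spec2 _ _ (by rw [P.hrf]; omega), P.hrt]

lemma colX_le (P : PolyoData r g m n) (y : ℕ) : colX g y ≤ m := by
  unfold colX
  have := colHeight_le (g.map (fun b => !b)) y
  rw [countTrue_map_not, P.hgf] at this
  exact this

lemma colH_le (P : PolyoData r g m n) (x : ℕ) : colHeight r x ≤ n := by
  have := colHeight_le r x; rw [P.hrt] at this; exact this

lemma colX_mono (g' : List Bool) {y y' : ℕ} (hy : y ≤ y') : colX g' y ≤ colX g' y' :=
  colHeight_mono _ hy

/-- prefix counts along r below the bounce corner -/
lemma rFalses_le (P : PolyoData r g m n) {x t : ℕ} (ht : t ≤ x + colHeight r x)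
    (htN : t ≤ m + n) : t - cnt r t ≤ x := by
  by_cases hx : x < m
  · obtain ⟨h1, _, _⟩ := rSpec1 P hx
    have := drops_mono r ht
    omega
  · have hlen : t ≤ r.length := by rw [P.hrl]; omega
    have := cnt_add_cntF r hlen
    have h2 := cntF_le_countFalse r t
    rw [P.hrf] at h2
    omega

lemma gTrues_le (P : PolyoData r g m n) {y t : ℕ} (ht : t ≤ y + colX g y) :
    cnt g t ≤ y := by
  by_cases hy : y < n
  · obtain ⟨h1, _, _⟩ := gSpec1 P hy
    calc cnt g t ≤ cnt g (y + colX g y) := cnt_mono g ht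
    _ = y := h1
  · have := cnt_le_countTrue g t
    rw [P.hgt] at this
    omega

lemma fixpoint_mn (P : PolyoData r g m n) {x y : ℕ}
    (hXY : colX g y = x) (hH : colHeight r x = y) : x = m ∧ y = n := by
  by_cases hy : y < n
  · by_cases hx : x < m
    · exfalso
      obtain ⟨hg1, hg2, hg3⟩ := gSpec1 P hy
      obtain ⟨hr1, hr2, hr3⟩ := rSpec1 P hx
      rw [hXY] at hg1 hg2 hg3
      rw [hH] at hr1 hr2 hr3
      have hGy : cnt g (x + y + 1) = y + 1 := by
        have := cnt_succ g (y + x)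
        rw [hg3] at this
        simp at this
        rw [show x + y + 1 = y + x + 1 from by omega, this, hg1]
      have hRy : cnt r (x + y + 1) = y := by
        have := cnt_succ r (x + y)
        rw [hr3] at this
        simp at this
        omega
      have := P.hdom (x + y + 1)
      omega
    · have hxm : x = m := by
        have := colX_le P y; omega
      have h2 := rSpec2 P (le_of_eq hxm.symm)
      omega
  · have hyn : y = n := by
      have := colH_le P x; omega
    have h2 := gSpec2 P (le_of_eq hyn.symm)
    omega

end Geometry


section Simulation

def colsN (r g : List Bool) (N : ℕ) : List (Multiset ℕ) :=
  (List.range N).map (fun c => msOf (r.getD c false) (g.getD c false))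

lemma colsN_length (r g : List Bool) (N : ℕ) : (colsN r g N).length = N := by
  simp [colsN]

lemma colsN_drop (r g : List Bool) (N t : ℕ) (ht : t < N) :
    (colsN r g N).drop t
      = msOf (r.getD t false) (g.getD t false) :: (colsN r g N).drop (t+1) := by
  have hlen : t < (colsN r g N).length := by rw [colsN_length]; exact ht
  rw [List.drop_eq_getElem_cons hlen]
  congr 1
  unfold colsN
  simp

lemma colsN_drop_len (r g : List Bool) (N : ℕ) : (colsN r g N).drop N = [] := by
  apply List.drop_eq_nil_of_le
  rw [colsN_length]

variable {r g : List Bool} {m n : ℕ}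

lemma eastRun (P : PolyoData r g m n) :
    ∀ (s x y : ℕ),
    (∀ j, j ≤ s → cnt g (x + y + j) ≤ y) →
    y ≤ cnt r (x + y) →
    x + y + s ≤ m + n →
    pmajGo ((colsN r g (m+n)).drop (x+y))
        (Multiset.replicate (cnt r (x+y) - y) 1
          + Multiset.replicate ((cntF g (x+y) - x) + 1) 2) (some 2)
      = List.replicate s 2 ++
        pmajGo ((colsN r g (m+n)).drop (x+y+s))
          (Multiset.replicate (cnt r (x+y+s) - y) 1
            + Multiset.replicate ((cntF g (x+y+s) - (x+s)) + 1) 2) (some 2) := by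
  intro s
  induction s with
  | zero => intro x y h1 h2 h3; simp
  | succ s ih =>
    intro x y h1 h2 h3
    have ht0 : x + y < m + n := by omega
    have ht0g : x + y < g.length := by rw [P.hgl]; omega
    have hG0 : cnt g (x + y) ≤ y := by simpa using h1 0 (by omega)
    have hG1 : cnt g (x + y + 1) ≤ y := h1 1 (by omega)
    have hF0 : cnt g (x+y) + cntF g (x+y) = x + y := cnt_add_cntF g (by omega)
    have hF1 : cnt g (x+y+1) + cntF g (x+y+1) = x + y + 1 := cnt_add_cntF g (by rw [P.hgl]; omega)
    have hFsucc := cntF_succ g (x+y) ht0g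
    have hYsucc := cnt_succ r (x+y)
    rw [colsN_drop r g (m+n) (x+y) ht0]
    rw [step2_2 (cnt r (x+y) - y) ((cntF g (x+y) - x) + 1)
        (if r.getD (x+y) false then 1 else 0) (if g.getD (x+y) false then 0 else 1)
        _ _ (msOf_repl _ _) (by omega) (by omega)]
    have hstate1 : cnt r (x+y) - y + (if r.getD (x+y) false then 1 else 0)
        = cnt r (x+y+1) - y := by omega
    have hstate2 : (cntF g (x+y) - x) + 1 - 1 + (if g.getD (x+y) false then 0 else 1)
        = (cntF g (x+y+1) - (x+1)) + 1 := by omega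
    rw [hstate1, hstate2]
    have h1' : ∀ j, j ≤ s → cnt g ((x+1) + y + j) ≤ y := by
      intro j hj
      have := h1 (j+1) (by omega)
      rwa [show x + y + (j+1) = (x+1) + y + j from by omega] at this
    have h2' : y ≤ cnt r ((x+1) + y) := by
      rw [show (x+1) + y = x + y + 1 from by omega]
      omega
    have h3' : (x+1) + y + s ≤ m + n := by omega
    have ih' := ih (x+1) y h1' h2' h3'
    rw [show (x+1) + y = x + y + 1 from by omega] at ih'
    rw [show x + y + 1 + s = x + y + (s+1) from by omega] at ih'
    rw [show x + 1 + s = x + (s+1) from by omega] at ih'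
    rw [ih']
    rfl

lemma northRun (P : PolyoData r g m n) :
    ∀ (s x y : ℕ),
    (∀ j, j ≤ s → y + j ≤ cnt r (x + y + j)) →
    cnt g (x + y) ≤ y →
    x + y + s ≤ m + n →
    pmajGo ((colsN r g (m+n)).drop (x+y))
        (Multiset.replicate ((cnt r (x+y) - y) + 1) 1
          + Multiset.replicate (cntF g (x+y) - x) 2) (some 1)
      = List.replicate s 1 ++
        pmajGo ((colsN r g (m+n)).drop (x+y+s))
          (Multiset.replicate ((cnt r (x+y+s) - (y+s)) + 1) 1
            + Multiset.replicate (cntF g (x+y+s) - x) 2) (some 1) := by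
  intro s
  induction s with
  | zero => intro x y h1 h2 h3; simp
  | succ s ih =>
    intro x y h1 h2 h3
    have ht0 : x + y < m + n := by omega
    have ht0g : x + y < g.length := by rw [P.hgl]; omega
    have hY0 : y ≤ cnt r (x + y) := by simpa using h1 0 (by omega)
    have hY1 : y + 1 ≤ cnt r (x + y + 1) := h1 1 (by omega)
    have hF0 : cnt g (x+y) + cntF g (x+y) = x + y := cnt_add_cntF g (by omega)
    have hG1 : cnt g (x+y+1) ≤ cnt g (x+y) + 1 := cnt_add_le g (x+y) 1
    have hF1 : cnt g (x+y+1) + cntF g (x+y+1) = x + y + 1 := cnt_add_cntF g (by rw [P.hgl]; omega)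
    have hFsucc := cntF_succ g (x+y) ht0g
    have hYsucc := cnt_succ r (x+y)
    rw [colsN_drop r g (m+n) (x+y) ht0]
    rw [step1_1 ((cnt r (x+y) - y) + 1) (cntF g (x+y) - x)
        (if r.getD (x+y) false then 1 else 0) (if g.getD (x+y) false then 0 else 1)
        _ _ (msOf_repl _ _) (by omega) (by omega)]
    have hstate1 : (cnt r (x+y) - y) + 1 - 1 + (if r.getD (x+y) false then 1 else 0)
        = (cnt r (x+y+1) - (y+1)) + 1 := by omega
    have hstate2 : cntF g (x+y) - x + (if g.getD (x+y) false then 0 else 1)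
        = cntF g (x+y+1) - x := by omega
    rw [hstate1, hstate2]
    have h1' : ∀ j, j ≤ s → (y+1) + j ≤ cnt r (x + (y+1) + j) := by
      intro j hj
      have := h1 (j+1) (by omega)
      rw [show x + y + (j+1) = x + (y+1) + j from by omega] at this
      omega
    have h2' : cnt g (x + (y+1)) ≤ y + 1 := by
      rw [show x + (y+1) = x + y + 1 from by omega]
      omega
    have h3' : x + (y+1) + s ≤ m + n := by omega
    have ih' := ih x (y+1) h1' h2' h3'
    rw [show x + (y+1) = x + y + 1 from by omega] at ih'
    rw [show x + y + 1 + s = x + y + (s+1) from by omega] at ih'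
    rw [show y + 1 + s = y + (s+1) from by omega] at ih'
    rw [ih']
    rfl

end Simulation


section MainSim

variable {r g : List Bool} {m n : ℕ}

lemma bRuns_succ (fuel x y : ℕ) :
    bRunsRedAux r g (fuel + 1) x y
      = if colX g y = x ∧ colHeight r (colX g y) = y then []
        else (colX g y - x) :: (colHeight r (colX g y) - y)
          :: bRunsRedAux r g fuel (colX g y) (colHeight r (colX g y)) := rfl

lemma EN (P : PolyoData r g m n)
    (fuel x y : ℕ)
    (IH : ∀ x'' y'', m + n + 1 ≤ fuel + (x'' + y'') →
        cnt g (x''+y'') ≤ y'' → cnt r (x''+y'') = y'' → y'' = colHeight r x'' →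
        x'' ≤ colX g y'' → x'' ≤ m → y'' ≤ n →
        pmajGo ((colsN r g (m+n)).drop (x''+y''))
          (Multiset.replicate 1 1 + Multiset.replicate (cntF g (x''+y'') - x'') 2) (some 1)
          = wordOf (bRunsRedAux r g fuel x'' y''))
    (hfuel : m + n ≤ fuel + (x + y))
    (hG : cnt g (x+y) ≤ y)
    (hY : cnt r (x+y) = y)
    (hyH : y ≤ colHeight r (colX g y))
    (hxX : x ≤ colX g y)
    (hx : x ≤ m) (hy : y ≤ n) :
    pmajGo ((colsN r g (m+n)).drop (x+y))
        (Multiset.replicate (cnt r (x+y) - y) 1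
          + Multiset.replicate ((cntF g (x+y) - x) + 1) 2) (some 2)
      = List.replicate (colX g y - x) 2
          ++ List.replicate (colHeight r (colX g y) - y) 1
          ++ wordOf (bRunsRedAux r g fuel (colX g y) (colHeight r (colX g y))) := by
  have hx'm : colX g y ≤ m := colX_le P y
  have hy'n : colHeight r (colX g y) ≤ n := colH_le P (colX g y)
  set x' := colX g y with hx'
  set y' := colHeight r x' with hy'
  -- east run of length x' - x
  have hEast := eastRun P (x' - x) x y
    (fun j hj => gTrues_le P (by omega))
    (by omega)
    (by omega)
  rw [show x + y + (x' - x) = x' + y from by omega,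
      show x + (x' - x) = x' from by omega] at hEast
  rw [hEast]
  by_cases hcase : y' = y
  · -- the pair is the last one: (x', y) is a fixpoint, hence (m, n)
    have hfix := fixpoint_mn P hx'.symm (by rw [← hy', hcase])
    have hxm : x' = m := hfix.1
    have hyn : y = n := hfix.2
    have hdrop : (colsN r g (m+n)).drop (x' + y) = [] := by
      rw [show x' + y = m + n from by omega]
      exact colsN_drop_len r g (m+n)
    rw [hdrop]
    rw [show pmajGo [] _ (some 2) = [] from rfl]
    have hword : wordOf (bRunsRedAux r g fuel x' y') = [] := by
      cases fuel with
      | zero => rfl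
      | succ fuel =>
        rw [bRuns_succ]
        rw [if_pos ⟨by rw [hcase, ← hx'], by rw [hcase, ← hx', ← hy', hcase]⟩]
        rfl
    rw [hword, show y' - y = 0 from by omega]
    simp
  · -- y < y' : switch step, then north run, then recurse
    have hylt : y < y' := by omega
    have hyn' : y < n := by omega
    have ht1 : x' + y < m + n := by omega
    -- facts about g at the corner
    obtain ⟨hg1, hg2, hg3⟩ := gSpec1 P hyn'
    rw [← hx'] at hg1 hg2 hg3
    rw [show y + x' = x' + y from by omega] at hg1 hg2 hg3
    have hgd : g.getD (x' + y) false = true := hg3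
    have hGs : cnt g (x' + y + 1) = y + 1 := by
      have := cnt_succ g (x' + y)
      rw [hgd] at this
      simp at this
      omega
    have hFa : cnt g (x' + y) + cntF g (x' + y) = x' + y := cnt_add_cntF g (by rw [P.hgl]; omega)
    have hFb : cnt g (x' + y + 1) + cntF g (x' + y + 1) = x' + y + 1 :=
      cnt_add_cntF g (by rw [P.hgl]; omega)
    have hrb : y ≤ cnt r (x' + y) := by
      have := rFalses_le P (x := x') (t := x' + y) (by omega) (by omega)
      omega
    have hrc : y + 1 ≤ cnt r (x' + y + 1) := by
      have := rFalses_le P (x := x') (t := x' + y + 1) (by omega) (by omega)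
      omega
    have hYsucc := cnt_succ r (x' + y)
    have hFsucc := cntF_succ g (x' + y) (by rw [P.hgl]; omega)
    have hdb : (if g.getD (x' + y) false then 0 else 1) = 0 := by rw [hgd]; simp
    rw [colsN_drop r g (m+n) (x'+y) ht1]
    rw [step2_1 (cnt r (x'+y) - y) ((cntF g (x'+y) - x') + 1)
        (if r.getD (x'+y) false then 1 else 0) (if g.getD (x'+y) false then 0 else 1)
        _ _ (msOf_repl _ _) (by omega) (by omega) (by omega)]
    have hstA : cnt r (x'+y) - y + (if r.getD (x'+y) false then 1 else 0)
        = (cnt r (x'+y+1) - (y+1)) + 1 := by omega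
    have hstB : (cntF g (x'+y) - x') + 1 - 1 + (if g.getD (x'+y) false then 0 else 1)
        = cntF g (x'+y+1) - x' := by omega
    rw [hstA, hstB]
    -- north run of length y' - (y+1)
    have hNorth := northRun P (y' - (y+1)) x' (y+1)
      (fun j hj => by
        have := rFalses_le P (x := x') (t := x' + (y+1) + j) (by omega) (by omega)
        omega)
      (by rw [show x' + (y+1) = x' + y + 1 from by omega]; omega)
      (by omega)
    rw [show x' + (y+1) = x' + y + 1 from by omega] at hNorth
    rw [show x' + y + 1 + (y' - (y+1)) = x' + y' from by omega] at hNorth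
    rw [show y + 1 + (y' - (y+1)) = y' from by omega] at hNorth
    rw [hNorth]
    -- the recursion at (x', y')
    have hcnt' : cnt r (x' + y') = y' := by
      by_cases hx'lt : x' < m
      · obtain ⟨h1, _, _⟩ := rSpec1 P hx'lt
        rw [← hy'] at h1
        exact h1
      · have hx'eq : x' = m := by omega
        have : y' = n := by rw [hy', hx'eq]; exact rSpec2 P (le_refl m)
        rw [hx'eq, this, cnt_of_le r (by rw [P.hrl]), P.hrt]
    have hx'X : x' ≤ colX g y' := by
      rw [hx']
      exact colX_mono g (by omega)
    have hIH := IH x' y' (by omega)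
      (gTrues_le P (by omega))
      hcnt' hy' hx'X hx'm hy'n
    rw [show (cnt r (x' + y') - y') + 1 = 1 from by omega] at hNorth ⊢
    rw [hIH]
    -- assemble
    rw [show colHeight r x' - y = (y' - (y+1)) + 1 from by omega]
    rw [show List.replicate ((y' - (y+1)) + 1) 1 = 1 :: List.replicate (y' - (y+1)) 1 from rfl]
    simp [List.append_assoc]

lemma Sim1 (P : PolyoData r g m n) :
    ∀ (fuel x y : ℕ), m + n + 1 ≤ fuel + (x + y) →
    cnt g (x+y) ≤ y → cnt r (x+y) = y → y = colHeight r x →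
    x ≤ colX g y → x ≤ m → y ≤ n →
    pmajGo ((colsN r g (m+n)).drop (x+y))
      (Multiset.replicate 1 1 + Multiset.replicate (cntF g (x+y) - x) 2) (some 1)
      = wordOf (bRunsRedAux r g fuel x y) := by
  intro fuel
  induction fuel with
  | zero =>
    intro x y hfuel hG hY hyH hxX hx hy
    exfalso
    omega
  | succ fuel ih =>
    intro x y hfuel hG hY hyH hxX hx hy
    rw [bRuns_succ]
    by_cases hfix : colX g y = x ∧ colHeight r (colX g y) = y
    · rw [if_pos hfix]
      have hfm := fixpoint_mn P hfix.1 (by rw [← hfix.1]; exact hfix.2)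
      have hdrop : (colsN r g (m+n)).drop (x + y) = [] := by
        rw [show x + y = m + n from by omega]
        exact colsN_drop_len r g (m+n)
      rw [hdrop]
      rfl
    · rw [if_neg hfix]
      have hxlt : x < colX g y := by
        rcases Nat.lt_or_ge x (colX g y) with h | h
        · exact h
        · exfalso
          have hxeq : x = colX g y := by omega
          exact hfix ⟨hxeq.symm, by rw [← hxeq, ← hyH]⟩
      have hxm : x < m := by
        have := colX_le P y
        omega
      have ht0 : x + y < m + n := by omega
      obtain ⟨hr1, hr2, hr3⟩ := rSpec1 P hxm
      rw [← hyH] at hr1 hr2 hr3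
      have hda : (if r.getD (x+y) false then 1 else 0) = 0 := by rw [hr3]; simp
      have hGs : cnt g (x + y + 1) ≤ y := gTrues_le P (by omega)
      have hFa : cnt g (x + y) + cntF g (x + y) = x + y := cnt_add_cntF g (by rw [P.hgl]; omega)
      have hFb : cnt g (x + y + 1) + cntF g (x + y + 1) = x + y + 1 :=
        cnt_add_cntF g (by rw [P.hgl]; omega)
      have hYsucc := cnt_succ r (x + y)
      have hFsucc := cntF_succ g (x + y) (by rw [P.hgl]; omega)
      rw [colsN_drop r g (m+n) (x+y) ht0]
      rw [step1_2 1 (cntF g (x+y) - x)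
          (if r.getD (x+y) false then 1 else 0) (if g.getD (x+y) false then 0 else 1)
          _ _ (msOf_repl _ _) (le_refl 1) (by omega) (by omega)]
      have hst1 : 1 - 1 + (if r.getD (x+y) false then 1 else 0) = cnt r (x+y+1) - y := by omega
      have hst2 : cntF g (x+y) - x + (if g.getD (x+y) false then 0 else 1)
          = (cntF g (x+y+1) - (x+1)) + 1 := by omega
      rw [hst1, hst2]
      have hEN := EN P fuel (x+1) y ih
        (by omega)
        (by rw [show x + 1 + y = x + y + 1 from by omega]; exact hGs)
        (by rw [show x + 1 + y = x + y + 1 from by omega]; omega)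
        (by exact le_trans (le_of_eq hyH) (colHeight_mono r (by omega)))
        (by omega) (by omega) hy
      rw [show x + 1 + y = x + y + 1 from by omega] at hEN
      rw [hEN]
      rw [show wordOf ((colX g y - x) :: (colHeight r (colX g y) - y)
            :: bRunsRedAux r g fuel (colX g y) (colHeight r (colX g y)))
          = List.replicate (colX g y - x) 2 ++ List.replicate (colHeight r (colX g y) - y) 1
            ++ wordOf (bRunsRedAux r g fuel (colX g y) (colHeight r (colX g y))) from rfl]
      rw [show colX g y - x = (colX g y - (x+1)) + 1 from by omega]
      rw [show List.replicate ((colX g y - (x+1)) + 1) 2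
          = 2 :: List.replicate (colX g y - (x+1)) 2 from rfl]
      simp [List.append_assoc]

end MainSim


section FinalGlue

variable {r g : List Bool} {m n : ℕ}

lemma AltP_bruns (P : PolyoData r g m n) :
    ∀ (fuel x y : ℕ), x ≤ colX g y → y ≤ colHeight r x →
      AltP (bRunsRedAux r g fuel x y) := by
  intro fuel
  induction fuel with
  | zero => intro x y _ _; trivial
  | succ fuel ih =>
    intro x y hxX hyH
    rw [bRuns_succ]
    by_cases hfix : colX g y = x ∧ colHeight r (colX g y) = y
    · rw [if_pos hfix]; trivial
    · rw [if_neg hfix]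
      have hyy' : y ≤ colHeight r (colX g y) :=
        le_trans hyH (colHeight_mono r hxX)
      have htail : AltP (bRunsRedAux r g fuel (colX g y) (colHeight r (colX g y))) :=
        ih (colX g y) (colHeight r (colX g y)) (colX_mono g hyy') (le_refl _)
      refine ⟨?_, htail⟩
      cases hrest : bRunsRedAux r g fuel (colX g y) (colHeight r (colX g y)) with
      | nil => trivial
      | cons hd tl =>
        cases fuel with
        | zero => exact absurd hrest (by simp [bRunsRedAux])
        | succ fuel' =>
          rw [bRuns_succ] at hrest
          by_cases hfix2 : colX g (colHeight r (colX g y)) = colX g y ∧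
              colHeight r (colX g (colHeight r (colX g y))) = colHeight r (colX g y)
          · rw [if_pos hfix2] at hrest; exact absurd hrest (by simp)
          · rw [if_neg hfix2] at hrest
            cases hrest
            constructor
            · rcases Nat.lt_or_ge y (colHeight r (colX g y)) with hlt | hge
              · omega
              · exfalso
                have hyy : y = colHeight r (colX g y) := by omega
                apply hfix2
                refine ⟨by rw [← hyy], by rw [← hyy]; exact hyy.symm⟩
            · rcases Nat.lt_or_ge (colX g y) (colX g (colHeight r (colX g y))) with hlt | hge
              · omega
              · exfalso
                have hxx : colX g (colHeight r (colX g y)) = colX g y := by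
                  have := colX_mono g hyy'
                  omega
                exact hfix2 ⟨hxx, by rw [hxx]⟩

lemma levels_length : ∀ (u : List Bool) (l : ℕ), (levels u l).length = countTrue u
  | [], _ => rfl
  | true :: u, l => by
    rw [show levels (true :: u) l = l :: levels u (l+1) from rfl, List.length_cons,
      levels_length u (l+1), countTrue_cons_true]
  | false :: u, l => by
    rw [show levels (false :: u) l = levels u (l-1) from rfl,
      levels_length u (l-1), countTrue_cons_false]

lemma countTrue_interlace : ∀ (r' g' : List Bool), r'.length = g'.length →
    countTrue (interlace r' g') = countTrue r' + countFalse g'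
  | [], g', h => by
    have : g' = [] := List.eq_nil_of_length_eq_zero (by simpa using h.symm)
    subst this
    rfl
  | a :: as, [], h => by simp at h
  | a :: as, b :: bs, h => by
    have hlen : as.length = bs.length := by simpa using h
    have := countTrue_interlace as bs hlen
    rw [show interlace (a :: as) (b :: bs) = a :: (!b) :: interlace as bs from rfl]
    cases a <;> cases b <;>
      simp only [countTrue_cons_true, countTrue_cons_false, countFalse_cons_true,
        countFalse_cons_false, Bool.not_true, Bool.not_false, this] <;> omega

lemma msOf_le2 (a b : Bool) : ∀ x ∈ msOf a b, x ≤ 2 := by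
  cases a <;> cases b <;> intro x hx <;> simp [msOf] at hx <;> omega

lemma pmajGo_zero_two (cols : List (Multiset ℕ)) :
    pmajGo cols 0 (some 2)
      = pmajGo cols (Multiset.replicate 0 1 + Multiset.replicate 1 2) (some 2) := by
  cases cols with
  | nil => rfl
  | cons col rest =>
    rw [pmajGo_cons, pmajGo_cons]
    have hC : (Multiset.replicate 0 1 + Multiset.replicate 1 2 : Multiset ℕ).erase 2
        = (0 : Multiset ℕ).erase 2 := by
      rw [m_erase2 0 1 (le_refl 1)]
      simp
    rw [hC]

end FinalGlue


/-- For every reduced parallelogram polyomino `P` of size `m × n`,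
`bounce(P) = pmaj(ψ(P))`. -/
theorem bounce_eq_pmaj_psi (m n : ℕ) (r g : List Bool) (h : IsRPolyo m n r g) :
    bounceRed r g = pmajOfCols (psiCols r g) := by
  have P := PolyoData.of_h h
  have hN : (levels (interlace r g) 1).length = m + n := by
    rw [levels_length, countTrue_interlace r g (by rw [P.hrl, P.hgl]), P.hrt, P.hgf]
    omega
  have hpsi : psiCols r g = colsN r g (m+n) := by
    rw [psiCols_eq r g P.hdom (by rw [hN, P.hrl]) (by rw [hN, P.hgl]), hN]
    rfl
  have hword : pmajGo (colsN r g (m+n)) 0 none = wordOf (bRunsRedAux r g (m+n+1) 0 0) := by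
    have hnone := pmajGo_none (colsN r g (m+n)) (by
      intro col hcol x hx
      unfold colsN at hcol
      rw [List.mem_map] at hcol
      obtain ⟨c, _, rfl⟩ := hcol
      exact msOf_le2 _ _ x hx)
    rw [hnone, pmajGo_zero_two]
    by_cases hfix : colX g 0 = 0 ∧ colHeight r (colX g 0) = 0
    · have hfm := fixpoint_mn P (x := 0) (y := 0) hfix.1 (by have h2 := hfix.2; rw [hfix.1] at h2; exact h2)
      have hmn : m + n = 0 := by omega
      have hcols : colsN r g (m+n) = [] := by rw [hmn]; rfl
      rw [hcols, bRuns_succ, if_pos hfix]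
      rfl
    · have hEN := EN P (m+n) 0 0 (Sim1 P (m+n))
        (by omega)
        (by simp [cnt_zero])
        (by simp [cnt_zero])
        (Nat.zero_le _)
        (Nat.zero_le _)
        (Nat.zero_le _)
        (Nat.zero_le _)
      rw [bRuns_succ, if_neg hfix]
      rw [show wordOf ((colX g 0 - 0) :: (colHeight r (colX g 0) - 0)
            :: bRunsRedAux r g (m+n) (colX g 0) (colHeight r (colX g 0)))
          = List.replicate (colX g 0 - 0) 2 ++ List.replicate (colHeight r (colX g 0) - 0) 1
            ++ wordOf (bRunsRedAux r g (m+n) (colX g 0) (colHeight r (colX g 0))) from rfl]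
      exact hEN
  have halt : AltP (bRunsRedAux r g (m+n+1) 0 0) :=
    AltP_bruns P (m+n+1) 0 0 (Nat.zero_le _) (Nat.zero_le _)
  have hRHS : pmajOfCols (psiCols r g) = statSum 0 (bRunsRedAux r g (m+n+1) 0 0) := by
    rw [hpsi]
    unfold pmajOfCols
    rw [hword, majL_eq_Dd, Dd_wordOf _ halt]
  have hLHS : bounceRed r g = statSum 0 (bRunsRedAux r g (m+n+1) 0 0) := by
    unfold bounceRed
    rw [P.hrl]
    rw [← sumconv (bRunsRedAux r g (m+n+1) 0 0) 0]
    apply Finset.sum_congr rfl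
    intro j _
    norm_num
  rw [hLHS, hRHS]
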